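/- Let R be a principal Artinian local ring (a commutative Artinian local ring in which every ideal is principal), let 0 → N → M →ʰ F be an exact sequence of finitely generated R-modules with F free of rank one, let s ≥ 1 be an integer, and let M' ⊆ M be a free R-submodule of rank s. Then there exists a basis y₁, …, y_s of M' such that y₁, …, y_{s−1} ∈ N (equivalently, h(yᵢ) = 0 for 1 ≤ i ≤ s−1); in particular, N' := Σ_{i=1}^{s−1} R·yᵢ is a free R-submodule of M' ∩ N of rank s−1. -/

import Mathlib

lemma my_dvd_total (R : Type*) [CommRing R] [IsLocalRing R] [IsPrincipalIdealRing R]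
    (a b : R) : a ∣ b ∨ b ∣ a := by
  obtain ⟨c, hc⟩ := Submodule.IsPrincipal.principal (Ideal.span {a, b})
  rw [Ideal.submodule_span_eq] at hc
  have ha : c ∣ a := by
    rw [← Ideal.mem_span_singleton, ← hc]; exact Ideal.subset_span (by simp)
  have hb : c ∣ b := by
    rw [← Ideal.mem_span_singleton, ← hc]; exact Ideal.subset_span (by simp)
  obtain ⟨u, hu⟩ := ha
  obtain ⟨v, hv⟩ := hb
  have hcmem : c ∈ Ideal.span ({a, b} : Set R) := by rw [hc]; exact Ideal.mem_span_singleton_self c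
  rw [Ideal.mem_span_pair] at hcmem
  obtain ⟨x, y, hxy⟩ := hcmem
  rw [hu, hv] at hxy
  rcases IsLocalRing.isUnit_or_isUnit_one_sub_self (x * u + y * v) with ht | ht
  · rcases IsLocalRing.isUnit_or_isUnit_of_isUnit_add ht with hxu | hyv
    · obtain ⟨w, hw⟩ := (isUnit_of_mul_isUnit_right hxu).exists_left_inv
      exact Or.inl ⟨w * v, by rw [hu, hv]; linear_combination (-(c*v))*hw⟩
    · obtain ⟨w, hw⟩ := (isUnit_of_mul_isUnit_right hyv).exists_left_inv
      exact Or.inr ⟨w * u, by rw [hu, hv]; linear_combination (-(c*u))*hw⟩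
  · obtain ⟨w, hw⟩ := ht.exists_left_inv
    have hc0 : c = 0 := by linear_combination (-c)*hw + (-w)*hxy
    exact Or.inl (by rw [hu, hv, hc0]; simp)

lemma my_exists_dvd_all {R ι : Type*} [CommRing R] [IsLocalRing R] [IsPrincipalIdealRing R]
    (t : Finset ι) (ht : t.Nonempty) (f : ι → R) : ∃ j ∈ t, ∀ i ∈ t, f j ∣ f i := by
  induction ht using Finset.Nonempty.cons_induction with
  | singleton a => exact ⟨a, by simp⟩
  | cons a t ha htne ih =>
    obtain ⟨j, hj, hjall⟩ := ih
    rcases my_dvd_total R (f a) (f j) with hd | hd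
    · exact ⟨a, Finset.mem_cons_self _ _, fun i hi => by
        rcases Finset.mem_cons.mp hi with rfl | hi
        · exact dvd_rfl
        · exact hd.trans (hjall i hi)⟩
    · exact ⟨j, Finset.mem_cons.mpr (Or.inr hj), fun i hi => by
        rcases Finset.mem_cons.mp hi with rfl | hi
        · exact hd
        · exact hjall i hi⟩

/-- Let `R` be a principal Artinian local ring, let `0 → N → M →ʰ F` be an
exact sequence of finitely generated `R`-modules with `F` free of rank one (so `N = ker h`),
let `s ≥ 1`, and let `M' ⊆ M` be a free `R`-submodule of rank `s`.  Then `M'` has a basis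
`y₀, …, y_{s-1}` whose first `s - 1` members lie in `N` (equivalently, are killed by `h`);
in particular the span `N'` of these first `s - 1` members is a free `R`-submodule of
`M' ∩ N` of rank `s - 1`. -/
theorem stark_systems_stmt10 (R : Type*) [CommRing R] [IsArtinianRing R] [IsLocalRing R]
    [IsPrincipalIdealRing R] (M F : Type*) [AddCommGroup M] [Module R M] [Module.Finite R M]
    [AddCommGroup F] [Module R F] (bF : Module.Basis (Fin 1) R F)
    (N : Submodule R M) (h : M →ₗ[R] F) (hN : N = LinearMap.ker h)
    (s : ℕ) (hs : 1 ≤ s) (M' : Submodule R M) (bM' : Module.Basis (Fin s) R M') :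
    ∃ y : Module.Basis (Fin s) R M',
      (∀ i : Fin s, (i : ℕ) < s - 1 → (y i : M) ∈ N) ∧
      (Submodule.span R
          (Set.range fun i : Fin (s - 1) => ((y (Fin.castLE (Nat.sub_le s 1) i) : M))) ≤
        M' ⊓ N) ∧
      Nonempty (Module.Basis (Fin (s - 1)) R
        (Submodule.span R
          (Set.range fun i : Fin (s - 1) => ((y (Fin.castLE (Nat.sub_le s 1) i) : M))))) := by
  haveI : Nonempty (Fin s) := ⟨⟨0, hs⟩⟩
  -- the coordinate functional
  set ψ : M' →ₗ[R] R :=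
    (Finsupp.lapply (0 : Fin 1)).comp (bF.repr.toLinearMap.comp (h.comp M'.subtype)) with hψ
  have hker : ∀ x : M', ψ x = 0 → h (x : M) = 0 := by
    intro x hx
    have h0 : bF.repr (h (x : M)) = 0 := Finsupp.ext fun i => by
      fin_cases i; simpa [hψ] using hx
    simpa using bF.repr.map_eq_zero_iff.mp h0
  obtain ⟨j, -, hj⟩ := my_exists_dvd_all Finset.univ Finset.univ_nonempty
    (fun i => ψ (bM' i))
  have ha : ∀ i, ∃ c, ψ (bM' i) = ψ (bM' j) * c := fun i => hj i (Finset.mem_univ i)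
  choose a haa using ha
  -- the change-of-basis automorphism
  set f : M' →ₗ[R] M' :=
    bM'.constr R (fun i => if i = j then bM' j else bM' i - a i • bM' j) with hf
  set g : M' →ₗ[R] M' :=
    bM'.constr R (fun i => if i = j then bM' j else bM' i + a i • bM' j) with hg
  have hfb : ∀ i, f (bM' i) = if i = j then bM' j else bM' i - a i • bM' j := fun i =>
    bM'.constr_basis R _ i
  have hgb : ∀ i, g (bM' i) = if i = j then bM' j else bM' i + a i • bM' j := fun i =>
    bM'.constr_basis R _ i
  have hfg : f.comp g = LinearMap.id := by
    apply bM'.ext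
    intro i
    by_cases hij : i = j
    · subst hij; simp [hgb, hfb]
    · simp only [LinearMap.comp_apply, hgb, if_neg hij, map_add, map_smul, hfb, if_pos rfl,
        if_neg hij, LinearMap.id_apply]
      abel_nf
      simp
  have hgf : g.comp f = LinearMap.id := by
    apply bM'.ext
    intro i
    by_cases hij : i = j
    · subst hij; simp [hgb, hfb]
    · simp only [LinearMap.comp_apply, hfb, if_neg hij, map_sub, map_smul, hgb, if_pos rfl,
        if_neg hij, LinearMap.id_apply]
      abel_nf
      simp
  set E : M' ≃ₗ[R] M' := LinearEquiv.ofLinear f g hfg hgf with hE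
  set last : Fin s := ⟨s - 1, by omega⟩ with hlast
  set σ : Equiv.Perm (Fin s) := Equiv.swap j last with hσ
  set Y : Module.Basis (Fin s) R M' := (bM'.map E).reindex σ with hY
  have hσsymm : σ.symm = σ := by rw [hσ]; exact Equiv.symm_swap j last
  have hYval : ∀ i, Y i = f (bM' (σ i)) := by
    intro i
    rw [hY, Module.Basis.reindex_apply, Module.Basis.map_apply, hσsymm, hE, LinearEquiv.ofLinear_apply]
  have hσne : ∀ i : Fin s, i ≠ last → σ i ≠ j := by
    intro i hi
    by_cases hij : i = j
    · subst hij; rw [hσ, Equiv.swap_apply_left]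
      intro hc; exact hi hc.symm
    · rw [hσ, Equiv.swap_apply_of_ne_of_ne hij hi]; exact hij
  have hψY : ∀ i : Fin s, i ≠ last → ψ (Y i) = 0 := by
    intro i hi
    rw [hYval, hfb, if_neg (hσne i hi), map_sub, map_smul, haa (σ i), smul_eq_mul]
    ring
  have hmem : ∀ i : Fin s, (i : ℕ) < s - 1 → (Y i : M) ∈ N := by
    intro i hi
    have hine : i ≠ last := by
      intro hc; rw [hc] at hi; simp [hlast] at hi
    rw [hN, LinearMap.mem_ker]
    exact hker _ (hψY i hine)
  refine ⟨Y, hmem, ?_, ?_⟩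
  · rw [Submodule.span_le]
    rintro x ⟨i, rfl⟩
    refine ⟨SetLike.coe_mem _, hmem _ ?_⟩
    simpa using i.isLt
  · have hli : LinearIndependent R
        (fun i : Fin (s - 1) => ((Y (Fin.castLE (Nat.sub_le s 1) i) : M))) := by
      have h1 : LinearIndependent R (fun i : Fin (s - 1) => Y (Fin.castLE (Nat.sub_le s 1) i)) :=
        Y.linearIndependent.comp _ (Fin.castLE_injective _)
      exact h1.map' M'.subtype (Submodule.ker_subtype M')
    exact ⟨Module.Basis.span hli⟩
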